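/- All zeros of the derivative $p'(z)$ lie in the disk $\left|z-\frac{\sum_{j=1}^n z_j}{n}\right|\le \sqrt{\frac{n-2}{n-1}}\left(\sum_{j=1}^{n-1}\left|\frac{n-1}{n}z_j+\frac{1}{n}z_n\right|^2+\frac{n-2}{n^2}\sum_{j=1}^{n-1}|z_n-z_j|^2-\frac{n-1}{n^2}\left|\sum_{j=1}^n z_j\right|^2\right)^{1/2}$. -/

import Mathlib

open Polynomial Finset

lemma eval_derivative_prod_lin (s : Finset ℕ) (z : ℕ → ℂ) (w : ℂ) :
    Polynomial.eval w (Polynomial.derivative (∏ j ∈ s, (X - C (z j)))) =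
      ∑ j ∈ s, ∏ k ∈ s.erase j, (w - z k) := by
  induction s using Finset.induction_on with
  | empty => simp
  | @insert a s ha ih =>
    have h1 : ∑ j ∈ s, ∏ k ∈ (insert a s).erase j, (w - z k)
        = (w - z a) * ∑ j ∈ s, ∏ k ∈ s.erase j, (w - z k) := by
      rw [Finset.mul_sum]
      refine Finset.sum_congr rfl fun j hj => ?_
      have hja : j ≠ a := fun h => ha (h ▸ hj)
      rw [Finset.erase_insert_of_ne hja.symm,
        Finset.prod_insert (fun h => ha (Finset.mem_of_mem_erase h))]
    rw [Finset.prod_insert ha, derivative_mul, derivative_sub, derivative_X, derivative_C,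
      sub_zero, one_mul, eval_add, eval_mul, eval_sub, eval_X, eval_C, ih,
      Finset.sum_insert ha, Finset.erase_insert ha, h1, eval_prod]
    simp [add_comm]


lemma sum_prod_erase_ne_zero (N : ℕ) (z : ℕ → ℂ) (w : ℂ) (j0 : ℕ)
    (hj0 : j0 ∈ Finset.range N) (hz : z j0 = w)
    (huniq : ∀ k ∈ Finset.range N, k ≠ j0 → z k ≠ w) :
    ∑ j ∈ Finset.range N, ∏ k ∈ (Finset.range N).erase j, (w - z k) ≠ 0 := by
  rw [Finset.sum_eq_single_of_mem j0 hj0 (fun j hj hne => ?_)]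
  · refine Finset.prod_ne_zero_iff.2 fun k hk => ?_
    have hk' := Finset.mem_of_mem_erase hk
    have hkne := Finset.ne_of_mem_erase hk
    exact sub_ne_zero.2 fun hh => huniq k hk' hkne hh.symm
  · refine Finset.prod_eq_zero (Finset.mem_erase.2 ⟨hne.symm, hj0⟩) ?_
    rw [hz, sub_self]

lemma exists_eigenvector (m : ℕ) (hm : 1 ≤ m) (z : ℕ → ℂ) (w : ℂ)
    (h : ∑ j ∈ Finset.range (m+1), ∏ k ∈ (Finset.range (m+1)).erase j, (w - z k) = 0) :
    ∃ x : ℕ → ℂ, (∃ j ∈ Finset.range m, x j ≠ 0) ∧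
      ∀ j ∈ Finset.range m,
        z j * x j + (z m - z j) / ((m:ℂ)+1) * ∑ k ∈ Finset.range m, x k = w * x j := by
  have hm1 : ((m:ℂ) + 1) ≠ 0 := by
    have h0 := (Nat.cast_ne_zero (R := ℂ)).2 (Nat.succ_ne_zero m)
    push_cast at h0
    exact h0
  by_cases hex : ∃ j0 ∈ Finset.range m, z j0 = w
  · obtain ⟨j0, hj0, hz0⟩ := hex
    by_cases hex2 : ∃ j1 ∈ Finset.range m, j1 ≠ j0 ∧ z j1 = w
    · obtain ⟨j1, hj1, hne, hz1⟩ := hex2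
      refine ⟨fun j => (if j = j0 then 1 else 0) - (if j = j1 then 1 else 0), ⟨j0, hj0, ?_⟩, ?_⟩
      · simp [hne.symm]
      · have hsum : ∑ k ∈ Finset.range m,
            ((if k = j0 then (1:ℂ) else 0) - (if k = j1 then 1 else 0)) = 0 := by
          rw [Finset.sum_sub_distrib]
          simp [Finset.sum_ite_eq', hj0, hj1]
        intro j hj
        rw [hsum, mul_zero, add_zero]
        by_cases h0 : j = j0
        · subst h0; simp [hne.symm, hz0]
        · by_cases h1 : j = j1
          · subst h1; simp [h0, hz1]
          · simp [h0, h1]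
    · -- exactly one j0 < m with z j0 = w; deduce z m = w
      push_neg at hex2
      have hzm : z m = w := by
        by_contra hzm
        refine sum_prod_erase_ne_zero (m+1) z w j0
          (Finset.mem_range.2 (lt_trans (Finset.mem_range.1 hj0) (Nat.lt_succ_self m))) hz0
          (fun k hk hkne => ?_) h
        have hk' := Finset.mem_range.1 hk
        rcases Nat.lt_succ_iff_lt_or_eq.1 hk' with hlt | heq
        · exact hex2 k (Finset.mem_range.2 hlt) hkne
        · subst heq; exact hzm
      refine ⟨fun j => if j = j0 then 2 else 1, ⟨j0, hj0, by simp⟩, ?_⟩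
      have hsum : ∑ k ∈ Finset.range m, (if k = j0 then (2:ℂ) else 1) = (m:ℂ) + 1 := by
        have : ∀ k ∈ Finset.range m, (if k = j0 then (2:ℂ) else 1)
            = 1 + (if k = j0 then 1 else 0) := by intro k _; split <;> norm_num
        rw [Finset.sum_congr rfl this, Finset.sum_add_distrib]
        simp [Finset.sum_ite_eq', hj0]
      intro j hj
      rw [hsum, div_mul_cancel₀ _ hm1]
      by_cases h0 : j = j0
      · subst h0; simp only [if_pos rfl]; rw [hz0, hzm]; ring
      · simp only [if_neg h0]; rw [hzm]; ring
  · push_neg at hex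
    have hzm : z m ≠ w := by
      intro hzm
      refine sum_prod_erase_ne_zero (m+1) z w m (Finset.mem_range.2 (Nat.lt_succ_self m)) hzm
        (fun k hk hkne => ?_) h
      have hk' := Finset.mem_range.1 hk
      rcases Nat.lt_succ_iff_lt_or_eq.1 hk' with hlt | heq
      · exact hex k (Finset.mem_range.2 hlt)
      · exact absurd heq hkne
    have hall : ∀ k ∈ Finset.range (m+1), w - z k ≠ 0 := by
      intro k hk
      have hk' := Finset.mem_range.1 hk
      rcases Nat.lt_succ_iff_lt_or_eq.1 hk' with hlt | heq
      · exact sub_ne_zero.2 fun hh => hex k (Finset.mem_range.2 hlt) hh.symm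
      · subst heq; exact sub_ne_zero.2 fun hh => hzm hh.symm
    have hne : ∃ j1 ∈ Finset.range m, z j1 ≠ z m := by
      by_contra hc
      push_neg at hc
      apply absurd h
      have hterm : ∀ j ∈ Finset.range (m+1),
          ∏ k ∈ (Finset.range (m+1)).erase j, (w - z k) = (w - z m) ^ m := by
        intro j hj
        have : ∀ k ∈ (Finset.range (m+1)).erase j, w - z k = w - z m := by
          intro k hk
          have hk' := Finset.mem_range.1 (Finset.mem_of_mem_erase hk)
          rcases Nat.lt_succ_iff_lt_or_eq.1 hk' with hlt | heq
          · rw [hc k (Finset.mem_range.2 hlt)]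
          · rw [heq]
        rw [Finset.prod_congr rfl this, Finset.prod_const,
          Finset.card_erase_of_mem hj, Finset.card_range]
        simp
      rw [Finset.sum_congr rfl hterm, Finset.sum_const, Finset.card_range, nsmul_eq_mul]
      refine mul_ne_zero ?_ (pow_ne_zero _ (hall m (Finset.mem_range.2 (Nat.lt_succ_self m))))
      exact_mod_cast Nat.succ_ne_zero m
    obtain ⟨j1, hj1, hj1ne⟩ := hne
    have hP : ∏ k ∈ Finset.range (m+1), (w - z k) ≠ 0 := Finset.prod_ne_zero_iff.2 hall
    have hinv : ∑ j ∈ Finset.range (m+1), (w - z j)⁻¹ = 0 := by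
      have hterm : ∀ j ∈ Finset.range (m+1),
          ∏ k ∈ (Finset.range (m+1)).erase j, (w - z k)
            = (w - z j)⁻¹ * ∏ k ∈ Finset.range (m+1), (w - z k) := by
        intro j hj
        rw [← Finset.mul_prod_erase _ _ hj, ← mul_assoc, inv_mul_cancel₀ (hall j hj), one_mul]
      rw [Finset.sum_congr rfl hterm, ← Finset.sum_mul] at h
      rcases mul_eq_zero.1 h with h' | h'
      · exact h'
      · exact absurd h' hP
    have hmw : z m - w ≠ 0 := sub_ne_zero.2 hzm
    have hS : ∑ j ∈ Finset.range m, (w - z j)⁻¹ = (z m - w)⁻¹ := by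
      rw [Finset.sum_range_succ] at hinv
      have : (w - z m)⁻¹ = -(z m - w)⁻¹ := by
        rw [neg_inv, neg_sub]
      rw [this] at hinv
      linear_combination hinv
    refine ⟨fun j => (z m - z j) / (w - z j), ⟨j1, hj1, ?_⟩, ?_⟩
    · exact div_ne_zero (sub_ne_zero.2 (Ne.symm hj1ne))
        (hall j1 (Finset.mem_range.2 (lt_trans (Finset.mem_range.1 hj1) (Nat.lt_succ_self m))))
    have hsum : ∑ k ∈ Finset.range m, (z m - z k)/(w - z k) = (m:ℂ)+1 := by
      have hterm : ∀ k ∈ Finset.range m, (z m - z k)/(w - z k)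
          = (z m - w) * (w - z k)⁻¹ + 1 := by
        intro k hk
        have hk2 := hall k (Finset.mem_range.2
          (lt_trans (Finset.mem_range.1 hk) (Nat.lt_succ_self m)))
        field_simp
        ring
      rw [Finset.sum_congr rfl hterm, Finset.sum_add_distrib, ← Finset.mul_sum, hS,
        mul_inv_cancel₀ hmw, Finset.sum_const, Finset.card_range, nsmul_eq_mul, mul_one]
      ring
    intro j hj
    have hwj := hall j (Finset.mem_range.2
      (lt_trans (Finset.mem_range.1 hj) (Nat.lt_succ_self m)))
    rw [hsum, div_mul_cancel₀ _ hm1]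
    have hx : (z m - z j)/(w - z j) * (w - z j) = z m - z j := div_mul_cancel₀ _ hwj
    linear_combination -hx


lemma cs_complex {ι : Type*} (s : Finset ι) (f g : ι → ℂ) :
    ‖∑ i ∈ s, f i * g i‖ ^ 2
      ≤ (∑ i ∈ s, ‖f i‖ ^ 2) * (∑ i ∈ s, ‖g i‖ ^ 2) := by
  have h1 : ‖∑ i ∈ s, f i * g i‖
      ≤ ∑ i ∈ s, ‖f i‖ * ‖g i‖ := by
    refine le_trans (norm_sum_le _ _) (le_of_eq ?_)
    exact Finset.sum_congr rfl fun i _ => norm_mul _ _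
  have h2 := Finset.sum_mul_sq_le_sq_mul_sq s (fun i => ‖f i‖)
    (fun i => ‖g i‖)
  exact le_trans (pow_le_pow_left₀ (norm_nonneg _) h1 2) h2

lemma spectral (m : ℕ) (hm : 1 ≤ m) (M : ℕ → ℕ → ℂ) (lam : ℂ) (x : ℕ → ℂ)
    (htr : ∑ j ∈ Finset.range m, M j j = 0)
    (heig : ∀ j ∈ Finset.range m, ∑ k ∈ Finset.range m, M j k * x k = lam * x j)
    (hx : ∃ j ∈ Finset.range m, x j ≠ 0) :
    ‖lam‖ ^ 2
      ≤ (1 - 1/(m:ℝ)) *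
        ∑ j ∈ Finset.range m, ∑ k ∈ Finset.range m, ‖M j k‖ ^ 2 := by
  obtain ⟨j0, hj0, hxj0⟩ := hx
  set s : ℝ := ∑ k ∈ Finset.range m, Complex.normSq (x k) with hs_def
  have hs : 0 < s := Finset.sum_pos' (fun i _ => Complex.normSq_nonneg _)
    ⟨j0, hj0, Complex.normSq_pos.2 hxj0⟩
  have hsne : (s:ℂ) ≠ 0 := Complex.ofReal_ne_zero.2 (ne_of_gt hs)
  have hmR : (0:ℝ) < (m:ℝ) := by exact_mod_cast hm
  have hmne : (m:ℝ) ≠ 0 := ne_of_gt hmR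
  have hmneC : (m:ℂ) ≠ 0 := by exact_mod_cast (Nat.cast_ne_zero (R := ℝ)).1 hmne
  set b : ℕ → ℕ → ℂ := fun j k =>
    (starRingEnd ℂ) (x j) * x k / (s:ℂ) - (if j = k then ((m:ℂ))⁻¹ else 0) with hb_def
  have hlam : ∑ j ∈ Finset.range m, ∑ k ∈ Finset.range m, M j k * b j k = lam := by
    have h1 : ∀ j ∈ Finset.range m, ∑ k ∈ Finset.range m, M j k * b j k
        = lam / (s:ℂ) * (Complex.normSq (x j) : ℂ) - M j j * (m:ℂ)⁻¹ := by
      intro j hj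
      have h2 : ∀ k ∈ Finset.range m, M j k * b j k
          = (starRingEnd ℂ) (x j) / (s:ℂ) * (M j k * x k)
            - (if j = k then M j j * (m:ℂ)⁻¹ else 0) := by
        intro k hk
        by_cases hjk : j = k
        · subst hjk; simp only [hb_def, eq_self_iff_true, if_true]; ring
        · simp only [hb_def, if_neg hjk]; ring
      rw [Finset.sum_congr rfl h2, Finset.sum_sub_distrib, ← Finset.mul_sum, heig j hj,
        Finset.sum_ite_eq (Finset.range m) j (fun _ => M j j * (m:ℂ)⁻¹), if_pos hj]
      congr 1
      rw [show (starRingEnd ℂ) (x j) / (s:ℂ) * (lam * x j)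
          = lam / s * ((starRingEnd ℂ) (x j) * x j) from by ring]
      congr 1
      rw [← Complex.normSq_eq_conj_mul_self]
    rw [Finset.sum_congr rfl h1, Finset.sum_sub_distrib, ← Finset.mul_sum, ← Finset.sum_mul,
      htr, zero_mul, sub_zero, ← Complex.ofReal_sum, ← hs_def, div_mul_cancel₀ _ hsne]
  have hb : ∑ j ∈ Finset.range m, ∑ k ∈ Finset.range m, ‖b j k‖ ^ 2
      = 1 - 1/(m:ℝ) := by
    have h1 : ∀ j ∈ Finset.range m, ∀ k ∈ Finset.range m, ‖b j k‖ ^ 2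
        = Complex.normSq (x j) / s^2 * Complex.normSq (x k)
          + (if j = k then 1/(m:ℝ)^2 - 2 * Complex.normSq (x j)/(s * m) else 0) := by
      intro j hj k hk
      by_cases hjk : j = k
      · subst hjk
        have hbe : b j j = ((Complex.normSq (x j)/s - 1/m : ℝ) : ℂ) := by
          simp only [hb_def, if_pos rfl]
          rw [← Complex.normSq_eq_conj_mul_self]
          push_cast
          ring
        rw [hbe, if_pos rfl, Complex.sq_norm, Complex.normSq_ofReal]
        field_simp
        ring
      · rw [if_neg hjk]
        simp only [hb_def, if_neg hjk, sub_zero]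
        rw [Complex.sq_norm, Complex.normSq_div, Complex.normSq_mul, Complex.normSq_conj,
          Complex.normSq_ofReal]
        rw [add_zero]
        ring
    have h2 : ∀ j ∈ Finset.range m,
        ∑ k ∈ Finset.range m, ‖b j k‖ ^ 2
          = Complex.normSq (x j) / s^2 * s
            + (1/(m:ℝ)^2 - 2 * Complex.normSq (x j)/(s * m)) := by
      intro j hj
      rw [Finset.sum_congr rfl (h1 j hj), Finset.sum_add_distrib, ← Finset.mul_sum, ← hs_def,
        Finset.sum_ite_eq (Finset.range m) j
          (fun _ => 1/(m:ℝ)^2 - 2 * Complex.normSq (x j)/(s * m)), if_pos hj]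
    rw [Finset.sum_congr rfl h2, Finset.sum_add_distrib, Finset.sum_sub_distrib]
    have e1 : ∑ j ∈ Finset.range m, Complex.normSq (x j) / s^2 * s = 1 := by
      rw [← Finset.sum_mul, ← Finset.sum_div, ← hs_def]
      field_simp
    have e3 : ∑ j ∈ Finset.range m, 2 * Complex.normSq (x j) / (s*m) = 2/m := by
      have h4 : ∀ j ∈ Finset.range m, 2 * Complex.normSq (x j) / (s*m)
          = Complex.normSq (x j) * (2/(s*m)) := by
        intro j hj; ring
      rw [Finset.sum_congr rfl h4, ← Finset.sum_mul, ← hs_def]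
      field_simp
    rw [e1, e3, Finset.sum_const, Finset.card_range, nsmul_eq_mul]
    field_simp
    ring
  have hcs := cs_complex ((Finset.range m) ×ˢ (Finset.range m))
    (fun p => M p.1 p.2) (fun p => b p.1 p.2)
  simp only [Finset.sum_product] at hcs
  rw [hlam, hb] at hcs
  exact le_trans hcs (le_of_eq (mul_comm _ _))

theorem critical_points_in_disk
    (n : ℕ) (hn : 2 ≤ n) (z : ℕ → ℂ) (w : ℂ)
    (hw : (Polynomial.derivative
        (∏ j ∈ Finset.range n, (X - C (z j)))).IsRoot w) :
    ‖w - (∑ j ∈ Finset.range n, z j) / (n : ℂ)‖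
      ≤ Real.sqrt (((n : ℝ) - 2) / ((n : ℝ) - 1)) *
        Real.sqrt
          ((∑ j ∈ Finset.range (n - 1),
              ‖(((n : ℝ) - 1) / (n : ℝ) : ℝ) * z j
                + ((1 / (n : ℝ) : ℝ) : ℂ) * z (n - 1)‖ ^ 2)
            + (((n : ℝ) - 2) / (n : ℝ) ^ 2) *
              ∑ j ∈ Finset.range (n - 1), ‖z (n - 1) - z j‖ ^ 2
            - (((n : ℝ) - 1) / (n : ℝ) ^ 2) *
                ‖∑ j ∈ Finset.range n, z j‖ ^ 2) := by
  obtain ⟨m, rfl⟩ : ∃ m, n = m + 1 := ⟨n - 1, (Nat.succ_pred_eq_of_pos (by omega)).symm⟩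
  simp only [Nat.add_sub_cancel]
  have hm1 : 1 ≤ m := by omega
  have hmR : (1:ℝ) ≤ (m:ℝ) := by exact_mod_cast hm1
  have hmne : (m:ℝ) ≠ 0 := by linarith
  have hm1C : ((m:ℂ) + 1) ≠ 0 := by
    have h0 := (Nat.cast_ne_zero (R := ℂ)).2 (Nat.succ_ne_zero m)
    push_cast at h0; exact h0
  set c : ℂ := (∑ j ∈ Finset.range (m+1), z j) / ((m:ℂ)+1) with hc_def
  have hZ : (∑ j ∈ Finset.range m, z j) + z m = ((m:ℂ)+1) * c := by
    rw [hc_def, mul_div_cancel₀ _ hm1C, Finset.sum_range_succ]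
  have hroot : ∑ j ∈ Finset.range (m+1),
      ∏ k ∈ (Finset.range (m+1)).erase j, (w - z k) = 0 := by
    have h0 : Polynomial.eval w
        (Polynomial.derivative (∏ j ∈ Finset.range (m+1), (X - C (z j)))) = 0 := hw
    rwa [eval_derivative_prod_lin] at h0
  obtain ⟨x, hxne, heigB⟩ := exists_eigenvector m hm1 z w hroot
  set M : ℕ → ℕ → ℂ := fun j k =>
    (if j = k then z j - c else 0) + (z m - z j)/((m:ℂ)+1) with hM_def
  have htr : ∑ j ∈ Finset.range m, M j j = 0 := by
    have h1 : ∀ j ∈ Finset.range m, M j j = (z j - c) + (z m - z j)/((m:ℂ)+1) := by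
      intro j hj; simp only [hM_def, eq_self_iff_true, if_true]
    rw [Finset.sum_congr rfl h1, Finset.sum_add_distrib, Finset.sum_sub_distrib, Finset.sum_const, Finset.card_range,
      nsmul_eq_mul, ← Finset.sum_div, Finset.sum_sub_distrib, Finset.sum_const,
      Finset.card_range, nsmul_eq_mul]
    field_simp
    linear_combination (m:ℂ) * hZ
  have heig : ∀ j ∈ Finset.range m,
      ∑ k ∈ Finset.range m, M j k * x k = (w - c) * x j := by
    intro j hj
    have h1 : ∀ k ∈ Finset.range m, M j k * x k
        = (if j = k then (z j - c) * x k else 0) + (z m - z j)/((m:ℂ)+1) * x k := by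
      intro k hk
      simp only [hM_def]
      split <;> ring
    rw [Finset.sum_congr rfl h1, Finset.sum_add_distrib,
      Finset.sum_ite_eq (Finset.range m) j (fun k => (z j - c) * x k), if_pos hj,
      ← Finset.mul_sum]
    linear_combination heigB j hj
  have hspec := spectral m hm1 M (w - c) x htr heig hxne
  -- now rewrite the Frobenius norm
  set ζ : ℕ → ℂ := fun j => ((m:ℂ)/((m:ℂ)+1)) * z j + (1/((m:ℂ)+1)) * z m with hζ_def
  have habs_m1 : ‖(m:ℂ)+1‖ = (m:ℝ)+1 := by
    rw [show ((m:ℂ)+1) = (((m:ℝ)+1 : ℝ) : ℂ) by push_cast; ring, Complex.norm_real, Real.norm_eq_abs]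
    rw [abs_of_pos (by linarith)]
  have hrow : ∀ j ∈ Finset.range m, ∑ k ∈ Finset.range m, ‖M j k‖ ^ 2
      = ‖ζ j - c‖^2
        + ((m:ℝ)-1) * (‖z m - z j‖^2 / ((m:ℝ)+1)^2) := by
    intro j hj
    have hdiag : M j j = ζ j - c := by
      simp only [hM_def, if_pos rfl, hζ_def, ↓reduceIte]
      field_simp
      ring
    have hpt : ∀ k ∈ Finset.range m, ‖M j k‖ ^ 2
        = ‖z m - z j‖^2 / ((m:ℝ)+1)^2
          + (if j = k then ‖ζ j - c‖^2
              - ‖z m - z j‖^2 / ((m:ℝ)+1)^2 else 0) := by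
      intro k hk
      by_cases hjk : j = k
      · subst hjk
        rw [hdiag, if_pos rfl]
        ring
      · have : M j k = (z m - z j)/((m:ℂ)+1) := by simp only [hM_def, if_neg hjk]; ring
        rw [this, if_neg hjk, add_zero, norm_div, habs_m1, div_pow]
    rw [Finset.sum_congr rfl hpt, Finset.sum_add_distrib, Finset.sum_const, Finset.card_range,
      nsmul_eq_mul, Finset.sum_ite_eq (Finset.range m) j _, if_pos hj]
    ring
  have hzeta_sum : ∑ j ∈ Finset.range m, ζ j = (m:ℂ) * c := by
    simp only [hζ_def]
    rw [Finset.sum_add_distrib, ← Finset.mul_sum, Finset.sum_const, Finset.card_range,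
      nsmul_eq_mul]
    field_simp
    linear_combination (m:ℂ) * hZ
  have hcenter : ∑ j ∈ Finset.range m, ‖ζ j - c‖^2
      = ∑ j ∈ Finset.range m, ‖ζ j‖^2 - (m:ℝ) * ‖c‖^2 := by
    have h1 : ∀ j ∈ Finset.range m, ‖ζ j - c‖^2
        = (‖ζ j‖^2 + ‖c‖ ^2)
          - 2 * (ζ j * (starRingEnd ℂ) c).re := by
      intro j hj
      rw [Complex.sq_norm, Complex.sq_norm, Complex.sq_norm, Complex.normSq_sub]
    rw [Finset.sum_congr rfl h1, Finset.sum_sub_distrib, Finset.sum_add_distrib,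
      Finset.sum_const, Finset.card_range, nsmul_eq_mul]
    have h2 : ∑ j ∈ Finset.range m, 2 * (ζ j * (starRingEnd ℂ) c).re
        = 2 * (m:ℝ) * ‖c‖^2 := by
      rw [← Finset.mul_sum, ← Complex.re_sum, ← Finset.sum_mul, hzeta_sum, mul_assoc,
        Complex.mul_conj]
      rw [show ((m:ℂ) * ((Complex.normSq c : ℝ):ℂ))
          = (((m:ℝ) * Complex.normSq c : ℝ) : ℂ) by push_cast; ring,
        Complex.ofReal_re, Complex.sq_norm]
      ring
    rw [h2]
    ring
  have hsum_abs : ‖∑ j ∈ Finset.range (m+1), z j‖ ^2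
      = ((m:ℝ)+1)^2 * ‖c‖ ^2 := by
    have h3 : (∑ j ∈ Finset.range (m+1), z j) = ((m:ℂ)+1) * c := by
      rw [hc_def, mul_div_cancel₀ _ hm1C]
    rw [h3, norm_mul, habs_m1, mul_pow]
  have hF : ∑ j ∈ Finset.range m, ∑ k ∈ Finset.range m, ‖M j k‖ ^ 2
      = (∑ j ∈ Finset.range m, ‖ζ j‖^2)
        + (((m:ℝ)+1-2)/((m:ℝ)+1)^2) *
            ∑ j ∈ Finset.range m, ‖z m - z j‖^2
        - (((m:ℝ)+1-1)/((m:ℝ)+1)^2) *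
            ‖∑ j ∈ Finset.range (m+1), z j‖^2 := by
    rw [Finset.sum_congr rfl hrow, Finset.sum_add_distrib, hcenter, hsum_abs,
      ← Finset.mul_sum, ← Finset.sum_div]
    field_simp
    ring
  have hc1 : ((m+1:ℕ):ℝ) = (m:ℝ)+1 := by push_cast; ring
  have hc2 : ((m+1:ℕ):ℂ) = (m:ℂ)+1 := by push_cast; ring
  rw [hc1, hc2, ← hc_def]
  have hTg : ∑ j ∈ Finset.range m,
      ‖((((m:ℝ)+1 - 1) / ((m:ℝ)+1) : ℝ) : ℂ) * z j
        + ((1 / ((m:ℝ)+1) : ℝ) : ℂ) * z m‖ ^2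
      = ∑ j ∈ Finset.range m, ‖ζ j‖^2 := by
    refine Finset.sum_congr rfl fun j _ => ?_
    rw [show ((((m:ℝ)+1 - 1) / ((m:ℝ)+1) : ℝ):ℂ) * z j + ((1 / ((m:ℝ)+1) : ℝ):ℂ) * z m
      = ζ j from by simp only [hζ_def]; push_cast; ring]
  have h0le : (0:ℝ) ≤ 1 - 1/(m:ℝ) := by
    rw [sub_nonneg, div_le_one (by linarith)]
    linarith
  have hfrac : ((m:ℝ)+1-2)/((m:ℝ)+1-1) = 1 - 1/(m:ℝ) := by
    rw [show (m:ℝ)+1-1 = m by ring, show (m:ℝ)+1-2 = m - 1 by ring, sub_div, div_self hmne]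
  rw [hTg, ← hF, hfrac, ← Real.sqrt_mul h0le]
  have habs := Real.sqrt_le_sqrt hspec
  rwa [Real.sqrt_sq (norm_nonneg _)] at habs
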